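/- arXiv:1401.0876 — 3 statements merged into one kernel-verified Lean document; each statement's English description precedes it below -/
import Mathlib

section
/- Let f : G → H be a group homomorphism with finite kernel. If C ⊆ H is a virtually cyclic subgroup, then the preimage f⁻¹(C) is virtually cyclic. -/
/-- A group is virtually cyclic if it has a cyclic subgroup of finite index. -/
def VirtuallyCyclic (G : Type*) [Group G] : Prop :=
  ∃ H : Subgroup G, IsCyclic H ∧ H.FiniteIndex

/-- A group mapping to a cyclic group with finite kernel is virtually cyclic. -/
lemma virtuallyCyclic_of_finite_ker_cyclic {A B : Type*} [Group A] [Group B]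
    (ψ : A →* B) (hker : Finite ψ.ker) (hB : IsCyclic B) : VirtuallyCyclic A := by
  -- the range of ψ is cyclic
  have : IsCyclic ψ.range := Subgroup.isCyclic ψ.range
  obtain ⟨⟨g, a, ha⟩, hg⟩ := this.exists_generator
  refine ⟨Subgroup.zpowers a, ⟨⟨⟨a, Subgroup.mem_zpowers a⟩, fun x => ?_⟩⟩, ?_⟩
  · obtain ⟨x, n, hn⟩ := x
    exact ⟨n, Subtype.ext hn⟩
  · -- the kernel surjects onto the quotient by zpowers a
    have hsurj : Function.Surjective
        (fun k : ψ.ker => (QuotientGroup.mk k.1 : A ⧸ Subgroup.zpowers a)) := by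
      intro q
      obtain ⟨x, rfl⟩ := QuotientGroup.mk_surjective q
      obtain ⟨n, hn⟩ := hg ⟨ψ x, x, rfl⟩
      have hn' : ψ a ^ n = ψ x := by
        have := congrArg Subtype.val hn
        simpa [ha] using this
      refine ⟨⟨x * a ^ (-n), ?_⟩, ?_⟩
      · simp [MonoidHom.mem_ker, ← hn', ha]
      · rw [QuotientGroup.eq]
        exact ⟨n, by group⟩
    have : Finite (A ⧸ Subgroup.zpowers a) := Finite.of_surjective _ hsurj
    exact Subgroup.finiteIndex_of_finite_quotient

/-- The key lemma: finite kernel preserves virtual cyclicity backwards. -/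
lemma virtuallyCyclic_of_finite_ker {A B : Type*} [Group A] [Group B]
    (ψ : A →* B) (hker : Finite ψ.ker) (hB : VirtuallyCyclic B) : VirtuallyCyclic A := by
  obtain ⟨D, hDcyc, hDfi⟩ := hB
  set E : Subgroup A := D.comap ψ with hE
  have hEfi : E.FiniteIndex := by
    constructor
    rw [hE, Subgroup.index_comap]
    exact (Subgroup.instFiniteIndex_subgroupOf D ψ.range).index_ne_zero
  -- restrict ψ to a map E →* D
  let ψ' : E →* D := ψ.subgroupComap D
  have hker' : Finite ψ'.ker := by
    have hmem : ∀ k : ψ'.ker, (k.1.1 : A) ∈ ψ.ker := by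
      intro k
      have h := MonoidHom.mem_ker.mp k.2
      exact congrArg Subtype.val h
    have hinj : Function.Injective (fun k : ψ'.ker => (⟨k.1.1, hmem k⟩ : ψ.ker)) := by
      intro k1 k2 h
      simp only [Subtype.mk.injEq] at h
      exact Subtype.ext (Subtype.ext h)
    exact Finite.of_injective _ hinj
  obtain ⟨Z, hZcyc, hZfi⟩ := virtuallyCyclic_of_finite_ker_cyclic ψ' hker' hDcyc
  refine ⟨Z.map E.subtype, ?_, ?_⟩
  · exact isCyclic_of_surjective _ (Subgroup.equivMapOfInjective Z E.subtype
      E.subtype_injective).surjective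
  · constructor
    rw [Subgroup.index_map_subtype]
    exact Nat.mul_ne_zero hZfi.index_ne_zero hEfi.index_ne_zero

theorem preimage_virtuallyCyclic_of_finite_ker
    {G H : Type*} [Group G] [Group H] (f : G →* H)
    (hker : Finite f.ker) (C : Subgroup H) (hC : VirtuallyCyclic C) :
    VirtuallyCyclic (C.comap f) := by
  let φ : (C.comap f) →* C := f.subgroupComap C
  have hφker : Finite φ.ker := by
    have hmem : ∀ k : φ.ker, (k.1.1 : G) ∈ f.ker := by
      intro k
      have h := MonoidHom.mem_ker.mp k.2
      exact congrArg Subtype.val h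
    have hinj : Function.Injective (fun k : φ.ker => (⟨k.1.1, hmem k⟩ : f.ker)) := by
      intro k1 k2 h
      simp only [Subtype.mk.injEq] at h
      exact Subtype.ext (Subtype.ext h)
    exact Finite.of_injective _ hinj
  exact virtuallyCyclic_of_finite_ker φ hφker hC
end

section
/- A class of groups C that is closed under isomorphism, contains all virtually cyclic groups, is closed under taking subgroups, and satisfies: if f : G → H is a homomorphism with H ∈ C, ker f ∈ C, and f⁻¹(Z) ∈ C for every infinite cyclic subgroup Z ≤ H, then G ∈ C — such a class is closed under extensions by finite groups: if N ⊴ G is finite and G/N ∈ C, then G ∈ C. -/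
universe u

theorem class_closed_under_finite_extensions
    (C : ∀ (G : Type u) [Group G], Prop)
    (hiso : ∀ (G H : Type u) [Group G] [Group H], (G ≃* H) → C G → C H)
    (hvc : ∀ (G : Type u) [Group G], VirtuallyCyclic G → C G)
    (hsub : ∀ (G : Type u) [Group G], C G → ∀ H : Subgroup G, C H)
    (hhom : ∀ (G H : Type u) [Group G] [Group H] (f : G →* H),
      C H → C f.ker →
      (∀ Z : Subgroup H, (∃ z : H, ¬ IsOfFinOrder z ∧ Z = Subgroup.zpowers z) →
        C (Z.comap f)) → C G)
    (G : Type u) [Group G] (N : Subgroup G) [N.Normal] (hN : Finite N)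
    (hQ : C (G ⧸ N)) : C G := by
  set f : G →* G ⧸ N := QuotientGroup.mk' N with hf
  apply hhom G (G ⧸ N) f hQ
  · -- ker f = N is finite, hence virtually cyclic
    apply hvc
    have hker : f.ker = N := QuotientGroup.ker_mk' N
    haveI : Finite f.ker := by rw [hker]; exact hN
    exact ⟨⊥, inferInstance, inferInstance⟩
  · rintro Z ⟨z, hz, rfl⟩
    apply hvc
    -- pick a preimage g of z
    obtain ⟨g, hg⟩ : ∃ g : G, f g = z := QuotientGroup.mk'_surjective N z
    set K : Subgroup G := (Subgroup.zpowers z).comap f with hK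
    have hgK : g ∈ K := by
      simp only [hK, Subgroup.mem_comap, hg]
      exact Subgroup.mem_zpowers z
    set H : Subgroup K := (Subgroup.zpowers g).subgroupOf K with hH
    refine ⟨H, ?_, ?_⟩
    · -- H is cyclic, being isomorphic to zpowers g
      have hle : Subgroup.zpowers g ≤ K := by
        rintro x ⟨k, rfl⟩
        exact Subgroup.zpow_mem K hgK k
      haveI : IsCyclic ↥(Subgroup.zpowers g) := ⟨⟨⟨g, Subgroup.mem_zpowers g⟩,
        fun ⟨x, k, hk⟩ => ⟨k, Subtype.ext (by simpa using hk)⟩⟩⟩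
      exact isCyclic_of_surjective (Subgroup.subgroupOfEquivOfLe hle).symm
        (Subgroup.subgroupOfEquivOfLe hle).symm.surjective
    · -- finite index: N surjects onto K ⧸ H
      have hsurj : Function.Surjective
          (fun n : N => (QuotientGroup.mk ⟨(n : G), by
            simp only [hK, Subgroup.mem_comap]
            have : f (n : G) = 1 := (QuotientGroup.eq_one_iff _).mpr n.2
            rw [this]; exact Subgroup.one_mem _⟩ : K ⧸ H)) := by
        intro q
        induction q using QuotientGroup.induction_on with
        | H x =>
          obtain ⟨k, hk⟩ : ∃ k : ℤ, f (x : G) = z ^ k := by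
            have := x.2
            simp only [hK, Subgroup.mem_comap, Subgroup.mem_zpowers_iff] at this
            exact this.imp fun k h => h.symm
          have hn : (x : G) * (g ^ k)⁻¹ ∈ N := by
            rw [← QuotientGroup.ker_mk' N, MonoidHom.mem_ker]
            simp [hk, hg, ← hf]
          refine ⟨⟨(x : G) * (g ^ k)⁻¹, hn⟩, ?_⟩
          apply (QuotientGroup.eq (s := H)).mpr
          simp only [hH, Subgroup.mem_subgroupOf]
          show (((x : G) * (g ^ k)⁻¹)⁻¹ * (x : G)) ∈ Subgroup.zpowers g
          have : ((x : G) * (g ^ k)⁻¹)⁻¹ * (x : G) = g ^ k := by group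
          rw [this]
          exact Subgroup.zpow_mem _ (Subgroup.mem_zpowers g) k
      have : Finite (K ⧸ H) := Finite.of_surjective _ hsurj
      exact Subgroup.finiteIndex_of_finite_quotient (H := H)
end

section
/- A class of groups C containing all virtually solvable groups, closed under subgroups and under passage from finite-index subgroups (if a finite index subgroup of G is in C then G is in C), and satisfying the homomorphism inheritance property (if f : G → H has H ∈ C, ker f ∈ C, and f⁻¹(Z) ∈ C for all infinite cyclic Z ≤ H, then G ∈ C), contains every group G admitting an abelian normal subgroup A with G/A ∈ C. -/
universe u

/-- A group is virtually solvable if it has a solvable subgroup of finite index. -/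
def VirtuallySolvable (G : Type*) [Group G] : Prop :=
  ∃ H : Subgroup G, IsSolvable H ∧ H.FiniteIndex

theorem class_closed_under_abelian_extensions
    (C : ∀ (G : Type u) [Group G], Prop)
    (hiso : ∀ (G H : Type u) [Group G] [Group H], (G ≃* H) → C G → C H)
    (hvs : ∀ (G : Type u) [Group G], VirtuallySolvable G → C G)
    (hsub : ∀ (G : Type u) [Group G], C G → ∀ H : Subgroup G, C H)
    (hfi : ∀ (G : Type u) [Group G] (H : Subgroup G), H.FiniteIndex → C H → C G)
    (hhom : ∀ (G H : Type u) [Group G] [Group H] (f : G →* H),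
      C H → C f.ker →
      (∀ Z : Subgroup H, (∃ z : H, ¬ IsOfFinOrder z ∧ Z = Subgroup.zpowers z) →
        C (Z.comap f)) → C G)
    (G : Type u) [Group G] (A : Subgroup G) [A.Normal]
    (hA : ∀ x ∈ A, ∀ y ∈ A, x * y = y * x)
    (hQ : C (G ⧸ A)) : C G := by
  have hAcomm : ∀ x y : A, x * y = y * x := fun x y =>
    Subtype.ext (hA x x.2 y y.2)
  letI : CommGroup A := { (inferInstance : Group A) with mul_comm := hAcomm }
  have hAsolv : IsSolvable A := (inferInstance : Group.IsSolvable A)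
  -- C of any subgroup of G contained in ... solvable: use hvs with ⊤
  have hCsolv : ∀ (K : Type u) [Group K], IsSolvable K → C K := by
    intro K _ hK
    haveI : Group.IsSolvable K := hK
    refine hvs K ⟨⊤, ?_, ?_⟩
    · exact solvable_of_surjective (f := (Subgroup.topEquiv (G := K)).symm.toMonoidHom)
        (MulEquiv.surjective _)
    · exact ⟨by simp⟩
  apply hhom G (G ⧸ A) (QuotientGroup.mk' A) hQ
  · rw [QuotientGroup.ker_mk']
    exact hCsolv _ hAsolv
  · rintro Z ⟨z, hz, rfl⟩
    set K := (Subgroup.zpowers z).comap (QuotientGroup.mk' A) with hK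
    -- A ≤ K
    have hAK : A ≤ K := by
      intro a ha
      simp only [hK, Subgroup.mem_comap]
      have : QuotientGroup.mk' A a = 1 := by
        rw [← QuotientGroup.ker_mk' A] at ha
        exact ha
      rw [this]
      exact Subgroup.one_mem _
    -- map K → zpowers z
    set g : K →* Subgroup.zpowers z :=
      MonoidHom.codRestrict ((QuotientGroup.mk' A).comp K.subtype) _ (fun k => k.2)
      with hg
    letI : CommGroup (Subgroup.zpowers z) := open IsMulCommutative in (inferInstance : CommGroup (Subgroup.zpowers z))
    have : IsSolvable K := by
      apply solvable_of_ker_le_range (Subgroup.inclusion hAK) g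
      intro k hk
      have hkA : (k : G) ∈ A := by
        have h1 : QuotientGroup.mk' A (k : G) = 1 := congrArg Subtype.val hk
        rw [← QuotientGroup.ker_mk' A]
        exact h1
      exact ⟨⟨(k : G), hkA⟩, rfl⟩
    exact hCsolv _ this
end
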